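/- Let Λ(u) = eᵘ/(1 + eᵘ) be the logistic function and define the cross-entropy risk increment ℓ̄(q, m) = −q·m + log(1 + eᵐ) for q ∈ (0,1), m ∈ ℝ. Then: (i) for all a, b ∈ ℝ, ℓ̄(Λ(a), b) − ℓ̄(Λ(a), a) ≤ (b − a)²/8; and (ii) for every F > 0 and all a, b ∈ [−F, F], ℓ̄(Λ(a), b) − ℓ̄(Λ(a), a) ≥ ( e^F / (2(1 + e^F)²) ) · (b − a)². -/

import Mathlib

/-- The logistic function Λ(u) = eᵘ / (1 + eᵘ). -/
noncomputable def logistic (u : ℝ) : ℝ := Real.exp u / (1 + Real.exp u)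

/-- Cross-entropy risk increment ℓ̄(q, m) = −q·m + log(1 + eᵐ). -/
noncomputable def crossEntropyRisk (q m : ℝ) : ℝ := -q * m + Real.log (1 + Real.exp m)

open Real Set

lemma one_add_exp_pos (t : ℝ) : (0:ℝ) < 1 + Real.exp t := by positivity

lemma hasDerivAt_logistic (t : ℝ) :
    HasDerivAt logistic (Real.exp t / (1 + Real.exp t) ^ 2) t := by
  have h := (Real.hasDerivAt_exp t).fun_div ((Real.hasDerivAt_exp t).const_add 1)
    (ne_of_gt (one_add_exp_pos t))
  exact h.congr_deriv (by ring)

lemma hasDerivAt_log1exp (t : ℝ) :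
    HasDerivAt (fun u => Real.log (1 + Real.exp u)) (logistic t) t := by
  have h := (((Real.hasDerivAt_exp t).const_add 1).log (ne_of_gt (one_add_exp_pos t)))
  simpa [logistic] using h

lemma logistic_deriv_le (t : ℝ) : Real.exp t / (1 + Real.exp t) ^ 2 ≤ 1 / 4 := by
  rw [div_le_iff₀ (by positivity)]
  nlinarith [sq_nonneg (1 - Real.exp t), Real.exp_pos t]

lemma logistic_deriv_ge {F t : ℝ} (h1 : -F ≤ t) (h2 : t ≤ F) :
    Real.exp F / (1 + Real.exp F) ^ 2 ≤ Real.exp t / (1 + Real.exp t) ^ 2 := by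
  rw [div_le_div_iff₀ (by positivity) (by positivity)]
  have hx : Real.exp t ≤ Real.exp F := Real.exp_le_exp.2 h2
  have hxy : 1 ≤ Real.exp t * Real.exp F := by
    rw [← Real.exp_add]
    have : (0:ℝ) ≤ t + F := by linarith
    calc (1:ℝ) = Real.exp 0 := (Real.exp_zero).symm
    _ ≤ Real.exp (t + F) := Real.exp_le_exp.2 this
  nlinarith [Real.exp_pos t, Real.exp_pos F]

/-- Λ is 1/4-Lipschitz from above: for a ≤ b, Λ b - Λ a ≤ (b-a)/4. -/
lemma logistic_lipschitz {a b : ℝ} (h : a ≤ b) :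
    logistic b - logistic a ≤ (b - a) / 4 := by
  have hanti : Antitone (fun t => logistic t - t / 4) := by
    apply antitone_of_hasDerivAt_nonpos
      (f' := fun t => Real.exp t / (1 + Real.exp t) ^ 2 - 1 / 4)
    · intro t
      exact (hasDerivAt_logistic t).sub ((hasDerivAt_id t).div_const 4)
    · intro t
      simp only [Pi.zero_apply]
      have := logistic_deriv_le t
      linarith
  have := hanti h
  simp only at this
  linarith

/-- On [-F,F], Λ grows at least at rate c = e^F/(1+e^F)². -/
lemma logistic_growth {F a b : ℝ} (haF : a ∈ Icc (-F) F) (hbF : b ∈ Icc (-F) F)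
    (h : a ≤ b) :
    Real.exp F / (1 + Real.exp F) ^ 2 * (b - a) ≤ logistic b - logistic a := by
  set c := Real.exp F / (1 + Real.exp F) ^ 2 with hc
  have hmono : MonotoneOn (fun t => logistic t - c * t) (Icc (-F) F) := by
    apply monotoneOn_of_hasDerivWithinAt_nonneg (f' := fun t =>
      Real.exp t / (1 + Real.exp t) ^ 2 - c) (convex_Icc _ _)
    · intro t _
      exact (((hasDerivAt_logistic t).sub ((hasDerivAt_id t).const_mul c)).continuousAt).continuousWithinAt
    · intro t ht
      have h : HasDerivAt (fun t => logistic t - c * t)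
          (Real.exp t / (1 + Real.exp t) ^ 2 - c) t := by
        simpa using (hasDerivAt_logistic t).fun_sub ((hasDerivAt_id t).const_mul c)
      exact h.hasDerivWithinAt
    · intro t ht
      rw [interior_Icc] at ht
      have := logistic_deriv_ge (le_of_lt ht.1) (le_of_lt ht.2)
      simpa [hc] using this
  have := hmono haF hbF h
  simp only at this
  linarith

/-- Two-sided Lipschitz risk bound (Assumption A3) for the Cross-Entropy loss, as used
in the Deep-learning application (Theorem 4.1): the excess pointwise risk of predicting
`b` when the true log-odds are `a` is at most `(b − a)²/8`, and at least
`(e^F / (2(1 + e^F)²)) (b − a)²` when `a, b ∈ [−F, F]`. -/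
theorem cross_entropy_lipschitz_risk :
    (∀ a b : ℝ,
      crossEntropyRisk (logistic a) b - crossEntropyRisk (logistic a) a
        ≤ (b - a) ^ 2 / 8) ∧
    (∀ F : ℝ, 0 < F → ∀ a b : ℝ, a ∈ Set.Icc (-F) F → b ∈ Set.Icc (-F) F →
      (Real.exp F / (2 * (1 + Real.exp F) ^ 2)) * (b - a) ^ 2
        ≤ crossEntropyRisk (logistic a) b - crossEntropyRisk (logistic a) a) := by
  constructor
  · intro a b
    -- ψ t = log(1+e^t) - Λ(a) t - (t-a)²/8
    set ψ : ℝ → ℝ := fun t => Real.log (1 + Real.exp t) - logistic a * t - (t - a) ^ 2 / 8 with hψ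
    have hd : ∀ t, HasDerivAt ψ (logistic t - logistic a - (t - a) / 4) t := by
      intro t
      have h1 : HasDerivAt (fun t : ℝ => (t - a) ^ 2 / 8) ((t - a) / 4) t := by
        have : HasDerivAt (fun t : ℝ => (t - a) ^ 2) (2 * (t - a)) t := by
          simpa using (((hasDerivAt_id t).sub_const a).fun_pow 2)
        have := this.div_const 8
        exact this.congr_deriv (by ring)
      have h2 : HasDerivAt (fun t : ℝ => logistic a * t) (logistic a) t := by
        simpa using (hasDerivAt_id t).const_mul (logistic a)
      exact ((hasDerivAt_log1exp t).sub h2).sub h1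
    have key : ψ b ≤ ψ a := by
      rcases le_total a b with hab | hab
      · have hanti : AntitoneOn ψ (Ici a) := by
          apply antitoneOn_of_hasDerivWithinAt_nonpos (f' := fun t => logistic t - logistic a - (t - a) / 4) (convex_Ici a)
          · exact fun t _ => (hd t).continuousAt.continuousWithinAt
          · exact fun t _ => (hd t).hasDerivWithinAt
          · intro t ht
            rw [interior_Ici] at ht
            have := logistic_lipschitz (le_of_lt ht)
            linarith
        exact hanti (self_mem_Ici) hab hab
      · have hmono : MonotoneOn ψ (Iic a) := by
          apply monotoneOn_of_hasDerivWithinAt_nonneg (f' := fun t => logistic t - logistic a - (t - a) / 4) (convex_Iic a)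
          · exact fun t _ => (hd t).continuousAt.continuousWithinAt
          · exact fun t _ => (hd t).hasDerivWithinAt
          · intro t ht
            rw [interior_Iic] at ht
            have := logistic_lipschitz (le_of_lt ht)
            linarith
        exact hmono (by exact hab) self_mem_Iic hab
    simp only [hψ, crossEntropyRisk] at key ⊢
    nlinarith [key]
  · intro F hF a b ha hb
    set c := Real.exp F / (1 + Real.exp F) ^ 2 with hc
    set ψ : ℝ → ℝ := fun t => Real.log (1 + Real.exp t) - logistic a * t - c / 2 * (t - a) ^ 2 with hψ
    have hd : ∀ t, HasDerivAt ψ (logistic t - logistic a - c * (t - a)) t := by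
      intro t
      have h1 : HasDerivAt (fun t : ℝ => c / 2 * (t - a) ^ 2) (c * (t - a)) t := by
        have : HasDerivAt (fun t : ℝ => (t - a) ^ 2) (2 * (t - a)) t := by
          simpa using (((hasDerivAt_id t).sub_const a).fun_pow 2)
        have := this.const_mul (c / 2)
        exact this.congr_deriv (by ring)
      have h2 : HasDerivAt (fun t : ℝ => logistic a * t) (logistic a) t := by
        simpa using (hasDerivAt_id t).const_mul (logistic a)
      exact ((hasDerivAt_log1exp t).sub h2).sub h1
    have key : ψ a ≤ ψ b := by
      rcases le_total a b with hab | hab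
      · have hmono : MonotoneOn ψ (Icc a F) := by
          apply monotoneOn_of_hasDerivWithinAt_nonneg (f' := fun t => logistic t - logistic a - c * (t - a)) (convex_Icc a F)
          · exact fun t _ => (hd t).continuousAt.continuousWithinAt
          · exact fun t _ => (hd t).hasDerivWithinAt
          · intro t ht
            rw [interior_Icc] at ht
            have htI : t ∈ Icc (-F) F := ⟨by linarith [ha.1, ht.1], le_of_lt ht.2⟩
            have := logistic_growth ha htI (le_of_lt ht.1)
            simp only [← hc] at this
            linarith
        have := hmono ⟨le_refl a, ha.2⟩ ⟨hab, hb.2⟩ hab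
        exact this
      · have hanti : AntitoneOn ψ (Icc (-F) a) := by
          apply antitoneOn_of_hasDerivWithinAt_nonpos (f' := fun t => logistic t - logistic a - c * (t - a)) (convex_Icc (-F) a)
          · exact fun t _ => (hd t).continuousAt.continuousWithinAt
          · exact fun t _ => (hd t).hasDerivWithinAt
          · intro t ht
            rw [interior_Icc] at ht
            have htI : t ∈ Icc (-F) F := ⟨le_of_lt ht.1, by linarith [ha.2, ht.2]⟩
            have := logistic_growth htI ha (le_of_lt ht.2)
            simp only [← hc] at this
            linarith
        exact hanti ⟨hb.1, hab⟩ ⟨ha.1, le_refl a⟩ hab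
    simp only [hψ, crossEntropyRisk] at key ⊢
    have hrw : Real.exp F / (2 * (1 + Real.exp F) ^ 2) = c / 2 := by
      rw [hc]; field_simp
    rw [hrw]
    nlinarith [key]
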